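/- Let η be a composition and I a subset maximal with respect to η, with t_1 := min(I). Then ∏_{i=1}^n (c_I(η)‾)_i^{(c_I(η))_i} = q^{2η_{t_1}+1} t^{−l'_η(t_1)} ∏_{i=1}^n η̄_i^{η_i}, where c_I(η)‾ is the spectral vector of c_I(η); equivalently, k_η / k_{c_I(η)} = d'_η(q^{−1},t^{−1}) / (q^{2η_{t_1}+1} t^{−l'_η(t_1)} d'_{c_I(η)}(q^{−1},t^{−1})). -/

import Mathlib

open scoped BigOperators Classical

noncomputable section

/-- The ground field `F = ℚ(q,t)`. -/
abbrev F : Type := FractionRing (MvPolynomial (Fin 2) ℚ)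

/-- The indeterminate `q` of `F = ℚ(q,t)`. -/
def q : F := algebraMap (MvPolynomial (Fin 2) ℚ) F (MvPolynomial.X 0)

/-- The indeterminate `t` of `F = ℚ(q,t)`. -/
def t : F := algebraMap (MvPolynomial (Fin 2) ℚ) F (MvPolynomial.X 1)

/-- A composition with (at most) `n` parts: nonzero entries only in positions `1,…,n`. -/
def IsComp (n : ℕ) (η : ℕ → ℕ) : Prop := ∀ j, η j ≠ 0 → j ∈ Finset.Icc 1 n

/-- The modulus `|η| = η_1 + ⋯ + η_n`. -/
def wt (n : ℕ) (η : ℕ → ℕ) : ℕ := ∑ j ∈ Finset.Icc 1 n, η j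

/-- `l'_η(i) = #{j<i : η_j ≥ η_i} + #{j>i : η_j > η_i}`. -/
def lprime (n : ℕ) (η : ℕ → ℕ) (i : ℕ) : ℕ :=
  ((Finset.Icc 1 n).filter fun j => j < i ∧ η i ≤ η j).card +
  ((Finset.Icc 1 n).filter fun j => i < j ∧ η i < η j).card

/-- The spectral vector `η̄` with parameters `qp, tp`: `η̄_i = qp^(η_i) tp^(-l'_η(i))`. -/
def spec (qp tp : F) (n : ℕ) (η : ℕ → ℕ) : ℕ → F := fun i =>
  qp ^ (η i) * tp ^ (-(lprime n η i : ℤ))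

/-- The finitely supported function obtained from `η` by truncating outside `[1,n]`. -/
def truncFinsupp (n : ℕ) (η : ℕ → ℕ) : ℕ →₀ ℕ :=
  Finsupp.onFinset (Finset.Icc 1 n) (fun j => if j ∈ Finset.Icc 1 n then η j else 0)
    (fun a ha => by by_contra h; simp [h] at ha)

/-- The point obtained from `z` by exchanging coordinates `i` and `j`. -/
def swapPt (i j : ℕ) (z : ℕ → F) : ℕ → F :=
  fun k => if k = i then z j else if k = j then z i else z k

/-- The transposition operator `s_i`. -/
def sOp (i : ℕ) (f : (ℕ → F) → F) : (ℕ → F) → F := fun z => f (swapPt i (i+1) z)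

/-- The Hecke operator `H_i` (with Hecke parameter `tp`). -/
def HOp (tp : F) (i : ℕ) (f : (ℕ → F) → F) : (ℕ → F) → F := fun z =>
  (tp - 1) * z i / (z i - z (i+1)) * f z +
    (z i - tp * z (i+1)) / (z i - z (i+1)) * f (swapPt i (i+1) z)

/-- The point `(z_n/q, z_1, …, z_{n-1})` (coordinates outside `[1,n]` unchanged). -/
def deltaPt (qp : F) (n : ℕ) (z : ℕ → F) : ℕ → F := fun k =>
  if k = 1 then z n / qp else if k ≤ n then z (k-1) else z k

/-- The operator `Φ = (z_n - t^{-n+1})·Δ`. -/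
def PhiOp (qp tp : F) (n : ℕ) (f : (ℕ → F) → F) : (ℕ → F) → F := fun z =>
  (z n - tp ^ (1 - (n:ℤ))) * f (deltaPt qp n z)

/-- The operator product `H_a H_{a+1} ⋯ H_b` (the identity when `a > b`). -/
def Hprod (tp : F) (a b : ℕ) (f : (ℕ → F) → F) : (ℕ → F) → F :=
  (List.range' a (b + 1 - a)).foldr (fun j g => HOp tp j g) f

/-- The operator `Z̃_i = H_i ⋯ H_{n-1} Φ H_1 ⋯ H_{i-1}`. -/
def Ztilde (qp tp : F) (n i : ℕ) (f : (ℕ → F) → F) : (ℕ → F) → F :=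
  Hprod tp i (n-1) (PhiOp qp tp n (Hprod tp 1 (i-1) f))

/-- The Cherednik operator `Ξ_i = z_i⁻¹ + z_i⁻¹ H_i ⋯ H_{n-1} Φ H_1 ⋯ H_{i-1}`. -/
def XiOp (qp tp : F) (n i : ℕ) (f : (ℕ → F) → F) : (ℕ → F) → F := fun z =>
  (z i)⁻¹ * f z + (z i)⁻¹ * Ztilde qp tp n i f z

/-- The operator product `Ξ_1 ⋯ Ξ̂_i ⋯ Ξ_n` (with `Ξ_i` omitted). -/
def XiProdOmit (qp tp : F) (n i : ℕ) (f : (ℕ → F) → F) : (ℕ → F) → F :=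
  ((List.range' 1 n).filter (fun j => j ≠ i)).foldr (fun j g => XiOp qp tp n j g) f

/-- The operator `Z_i = t^{-binom(n,2)} (z_i Ξ_i - 1) Ξ_1 ⋯ Ξ̂_i ⋯ Ξ_n`. -/
def ZOp (qp tp : F) (n i : ℕ) (f : (ℕ → F) → F) : (ℕ → F) → F := fun z =>
  tp ^ (-((n * (n-1) / 2 : ℕ) : ℤ)) *
    (z i * XiOp qp tp n i (XiProdOmit qp tp n i f) z - XiProdOmit qp tp n i f z)

/-- A `qp`-generic point: the quantities `z_i qp^a` (for `1 ≤ i ≤ n`, `a ∈ ℕ`) are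
pairwise distinct.  All the rational operations occurring in the operators above are
defined at such points. -/
def Generic (qp : F) (n : ℕ) (z : ℕ → F) : Prop :=
  ∀ i ∈ Finset.Icc 1 n, ∀ j ∈ Finset.Icc 1 n, ∀ a b : ℕ,
    (i ≠ j ∨ a ≠ b) → z i * qp ^ a ≠ z j * qp ^ b

/-- The Demazure-Lusztig operator `T_i`. -/
def TOp (tp : F) (i : ℕ) (f : (ℕ → F) → F) : (ℕ → F) → F := fun z =>
  tp * f z + (tp * z i - z (i+1)) / (z i - z (i+1)) * (f (swapPt i (i+1) z) - f z)

/-- The inverse Demazure-Lusztig operator `T_i⁻¹ = t⁻¹ - 1 + t⁻¹ T_i`. -/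
def TinvOp (tp : F) (i : ℕ) (f : (ℕ → F) → F) : (ℕ → F) → F := fun z =>
  (tp⁻¹ - 1) * f z + tp⁻¹ * TOp tp i f z

/-- The point obtained from `z` by the `q`-shift `z_1 ↦ q z_1`. -/
def tauPt (qp : F) (z : ℕ → F) : ℕ → F := fun k => if k = 1 then qp * z 1 else z k

/-- The operator `ω = s_{n-1} ⋯ s_1 τ_1`. -/
def omegaOp (qp : F) (n : ℕ) (f : (ℕ → F) → F) : (ℕ → F) → F :=
  (List.range' 1 (n-1)).foldl (fun g j => sOp j g) (fun z => f (tauPt qp z))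

/-- The operator product `T_a T_{a+1} ⋯ T_b` (identity when `a > b`). -/
def Tprod (tp : F) (a b : ℕ) (f : (ℕ → F) → F) : (ℕ → F) → F :=
  (List.range' a (b + 1 - a)).foldr (fun j g => TOp tp j g) f

/-- The operator product `T_a⁻¹ T_{a+1}⁻¹ ⋯ T_b⁻¹` (identity when `a > b`). -/
def TinvProd (tp : F) (a b : ℕ) (f : (ℕ → F) → F) : (ℕ → F) → F :=
  (List.range' a (b + 1 - a)).foldr (fun j g => TinvOp tp j g) f

/-- The Cherednik operator `Y_i = t^{-n+1} T_i ⋯ T_{n-1} ω T_1⁻¹ ⋯ T_{i-1}⁻¹`. -/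
def YOp (qp tp : F) (n i : ℕ) (f : (ℕ → F) → F) : (ℕ → F) → F := fun z =>
  tp ^ (1 - (n:ℤ)) * Tprod tp i (n-1) (omegaOp qp n (TinvProd tp 1 (i-1) f)) z

/-- Strict dominance order on compositions (restricted to the window `[1,n]`). -/
def domlt (n : ℕ) (μ η : ℕ → ℕ) : Prop :=
  (∃ i ∈ Finset.Icc 1 n, μ i ≠ η i) ∧
    ∀ p ∈ Finset.Icc 1 n, ∑ i ∈ Finset.Icc 1 p, μ i ≤ ∑ i ∈ Finset.Icc 1 p, η i

/-- `sortDesc n μ` is `μ⁺`, the decreasing rearrangement of `(μ_1,…,μ_n)` (1-based). -/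
def sortDesc (n : ℕ) (μ : ℕ → ℕ) : ℕ → ℕ := fun i =>
  ((((Finset.Icc 1 n).val.map μ).sort (· ≤ ·)).reverse).getD (i - 1) 0

/-- The partial order `≺` on compositions: `μ ≺ η` iff `μ⁺ < η⁺`, or `μ⁺ = η⁺` and `μ < η`. -/
def precOrd (n : ℕ) (μ η : ℕ → ℕ) : Prop :=
  domlt n (sortDesc n μ) (sortDesc n η) ∨
    ((∀ i ∈ Finset.Icc 1 n, sortDesc n μ i = sortDesc n η i) ∧ domlt n μ η)

/-- `P` is the nonsymmetric Macdonald polynomial `E_η(z; qp, tp)`: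
it is of the monic triangular form `z^η + Σ_{ν ≺ η} b_{ην} z^ν` and satisfies the
eigenvalue equations `Y_i P = η̄_i P` (stated at generic points). -/
def IsNSMac (qp tp : F) (n : ℕ) (η : ℕ → ℕ) (P : MvPolynomial ℕ F) : Prop :=
  P.coeff (truncFinsupp n η) = 1 ∧
  (∀ ν : ℕ →₀ ℕ, P.coeff ν ≠ 0 → ν = truncFinsupp n η ∨
    (IsComp n (fun j => ν j) ∧ wt n (fun j => ν j) = wt n η ∧ precOrd n (fun j => ν j) η)) ∧
  (∀ i ∈ Finset.Icc 1 n, ∀ z : ℕ → F, Generic qp n z →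
    YOp qp tp n i (fun w => MvPolynomial.eval w P) z = spec qp tp n η i * MvPolynomial.eval z P)

/-- `P` is the nonsymmetric interpolation Macdonald polynomial `E*_η(z;q,t)`:
a polynomial in `z_1,…,z_n` of total degree `≤ |η|`, with coefficient `1` on `z^η`,
vanishing at the spectral vectors `μ̄` of all compositions `μ ≠ η` with `|μ| ≤ |η|`. -/
def IsInterp (n : ℕ) (η : ℕ → ℕ) (P : MvPolynomial ℕ F) : Prop :=
  P.totalDegree ≤ wt n η ∧
  P.coeff (truncFinsupp n η) = 1 ∧
  (∀ ν : ℕ →₀ ℕ, P.coeff ν ≠ 0 → IsComp n (fun j => ν j)) ∧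
  ∀ μ : ℕ → ℕ, IsComp n μ → wt n μ ≤ wt n η → truncFinsupp n μ ≠ truncFinsupp n η →
    MvPolynomial.eval (spec q t n μ) P = 0

/-- The least element `t_1` of a finite set `I`. -/
def fmin (I : Finset ℕ) : ℕ := if h : I.Nonempty then I.min' h else 0

/-- The greatest element `t_s` of a finite set `I`. -/
def fmax (I : Finset ℕ) : ℕ := if h : I.Nonempty then I.max' h else 0

/-- The least element of `I` greater than `j`. -/
def succI (I : Finset ℕ) (j : ℕ) : ℕ := fmin (I.filter (fun k => j < k))

/-- The greatest element of `I` smaller than `j`. -/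
def predI (I : Finset ℕ) (j : ℕ) : ℕ := fmax (I.filter (fun k => k < j))

/-- `â(x,y) = (t-1)x/(x-y)`. -/
def ahat (tp x y : F) : F := (tp - 1) * x / (x - y)

/-- `b̂(x,y) = (x-ty)/(x-y)`. -/
def bhat (tp x y : F) : F := (x - tp * y) / (x - y)

/-- `A_I(z) = â(z_{t_s}/q, z_{t_1}) ∏_{u=1}^{s-1} â(z_{t_u}, z_{t_{u+1}})`. -/
def AI (qp tp : F) (I : Finset ℕ) (z : ℕ → F) : F :=
  ahat tp (z (fmax I) / qp) (z (fmin I)) *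
    (((I.sort (· ≤ ·)).zip (I.sort (· ≤ ·)).tail).map (fun p => ahat tp (z p.1) (z p.2))).prod

/-- `B_I(z)`. -/
def BI (qp tp : F) (n : ℕ) (I : Finset ℕ) (z : ℕ → F) : F :=
  (z (fmax I) - tp ^ (1 - (n:ℤ))) *
    (∏ j ∈ (Finset.Icc 1 n).filter (fun j => j < fmin I), bhat tp (z (fmax I) / qp) (z j)) *
    (∏ j ∈ (Finset.Icc 1 n).filter (fun j => j ∉ I ∧ fmin I < j), bhat tp (z (predI I j)) (z j))

/-- `χ_I^{(i)}(z)`. -/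
def chiI (qp tp : F) (I : Finset ℕ) (i : ℕ) (z : ℕ → F) : F :=
  if i = fmin I then (ahat tp (z (fmax I) / qp) (z i))⁻¹
  else (ahat tp (z (predI I i)) (z i))⁻¹

/-- `r_I^{(i)}(z) = χ_I^{(i)}(z) A_I(z) B_I(z)`. -/
def rI (qp tp : F) (n : ℕ) (I : Finset ℕ) (i : ℕ) (z : ℕ → F) : F :=
  chiI qp tp I i z * AI qp tp I z * BI qp tp n I z

/-- The point `Iz`. -/
def Ipt (qp : F) (I : Finset ℕ) (z : ℕ → F) : ℕ → F := fun j =>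
  if j = fmin I then z (fmax I) / qp
  else if j ∈ I then z (predI I j)
  else z j

/-- `B̃_I(z)`. -/
def BtildeI (qp tp : F) (n : ℕ) (I : Finset ℕ) (z : ℕ → F) : F :=
  (qp * z (fmin I) - tp ^ (1 - (n:ℤ))) *
    (∏ j ∈ (Finset.Icc 1 n).filter (fun j => j ∉ I ∧ j < fmax I), bhat tp (z (succI I j)) (z j)) *
    (∏ j ∈ (Finset.Icc 1 n).filter (fun j => fmax I < j), bhat tp (qp * z (fmin I)) (z j))

/-- `χ̃_I^{(i)}(z)`. -/
def chitildeI (qp tp : F) (I : Finset ℕ) (i : ℕ) (z : ℕ → F) : F :=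
  if i = fmax I then z i / ahat tp (z i) (qp * z (fmin I))
  else z i / ahat tp (z i) (z (succI I i))

/-- The composition `c_I(η)`. -/
def cIfun (I : Finset ℕ) (η : ℕ → ℕ) : ℕ → ℕ := fun j =>
  if j = fmax I then η (fmin I) + 1
  else if j ∈ I then η (succI I j)
  else η j

/-- `I` is maximal with respect to `η`. -/
def MaximalI (n : ℕ) (I : Finset ℕ) (η : ℕ → ℕ) : Prop :=
  (∀ j ∈ Finset.Icc 1 n, j ∉ I → j < fmax I → η j ≠ η (succI I j)) ∧
  (∀ j ∈ Finset.Icc 1 n, fmax I < j → η j ≠ η (fmin I) + 1)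

/-- `I` is comaximal with respect to `lam`. -/
def CoMaximalI (n : ℕ) (I : Finset ℕ) (lam : ℕ → ℕ) : Prop :=
  (∀ j ∈ Finset.Icc 1 n, j ∉ I → fmin I < j → lam j ≠ lam (predI I j)) ∧
  (∀ j ∈ Finset.Icc 1 n, j < fmin I → lam j ≠ lam (fmax I) - 1) ∧
  lam (fmax I) ≠ 0

/-- `J^I_η`: the collection of nonempty subsets of `{1,…,n}` maximal with respect to `η`. -/
def Jset (n : ℕ) (η : ℕ → ℕ) : Finset (Finset ℕ) :=
  (Finset.Icc 1 n).powerset.filter (fun I => I.Nonempty ∧ MaximalI n I η)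

/-- The arm length `a_η(i,j) = η_i - j`. -/
def armF (η : ℕ → ℕ) (i j : ℕ) : ℕ := η i - j

/-- The leg length `l_η(i,j)`. -/
def legF (n : ℕ) (η : ℕ → ℕ) (i j : ℕ) : ℕ :=
  ((Finset.Icc 1 n).filter fun k => i < k ∧ j ≤ η k ∧ η k ≤ η i).card +
  ((Finset.Icc 1 n).filter fun k => k < i ∧ j ≤ η k + 1 ∧ η k + 1 ≤ η i).card

/-- `d'_η(qp,tp) = ∏_{s ∈ diag(η)} (1 - qp^{a_η(s)+1} tp^{l_η(s)})`. -/
def dprime (qp tp : F) (n : ℕ) (η : ℕ → ℕ) : F :=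
  ∏ i ∈ Finset.Icc 1 n, ∏ j ∈ Finset.Icc 1 (η i),
    (1 - qp ^ (armF η i j + 1) * tp ^ (legF n η i j))

/-- `k_η = (∏_i η̄_i^{η_i}) d'_η(q⁻¹,t⁻¹)`. -/
def kconst (n : ℕ) (η : ℕ → ℕ) : F :=
  (∏ i ∈ Finset.Icc 1 n, spec q t n η i ^ (η i)) * dprime q⁻¹ t⁻¹ n η

/-- The Pieri coefficient `a_{η,c_I(η)}`. -/
def acoef (n : ℕ) (η : ℕ → ℕ) (I : Finset ℕ) : F :=
  -((q - 1) * dprime q⁻¹ t⁻¹ n η * AI q t I (spec q t n η) * BtildeI q t n I (spec q t n η)) /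
    (q ^ (η (fmin I) + 1) * (t - 1) * dprime q⁻¹ t⁻¹ n (cIfun I η))

/-- The tuples `(v_1,…,v_n)` of nonnegative integers with `v_1 + ⋯ + v_n = m`. -/
def compTuples (n m : ℕ) : Finset (Fin n → ℕ) :=
  (Fintype.piFinset fun _ => Finset.range (m + 1)).filter (fun v => ∑ i, v i = m)

/-- The (1-based) composition associated with a tuple `v : Fin n → ℕ`. -/
def ofFin (n : ℕ) (v : Fin n → ℕ) : ℕ → ℕ := fun j =>
  if h : 1 ≤ j ∧ j - 1 < n then v ⟨j - 1, h.2⟩ else 0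

section Aux

lemma fmin_mem {I : Finset ℕ} (hne : I.Nonempty) : fmin I ∈ I := by
  rw [fmin, dif_pos hne]; exact I.min'_mem hne

lemma fmax_mem {I : Finset ℕ} (hne : I.Nonempty) : fmax I ∈ I := by
  rw [fmax, dif_pos hne]; exact I.max'_mem hne

lemma fmin_le {I : Finset ℕ} (hne : I.Nonempty) {j : ℕ} (hj : j ∈ I) : fmin I ≤ j := by
  rw [fmin, dif_pos hne]; exact I.min'_le j hj

lemma le_fmax {I : Finset ℕ} (hne : I.Nonempty) {j : ℕ} (hj : j ∈ I) : j ≤ fmax I := by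
  rw [fmax, dif_pos hne]; exact I.le_max' j hj

lemma succI_spec {I : Finset ℕ} (hne : I.Nonempty) {j : ℕ} (hj : j ∈ I) (hjm : j ≠ fmax I) :
    succI I j ∈ I ∧ j < succI I j ∧ ∀ k ∈ I, j < k → succI I j ≤ k := by
  have hmem : fmax I ∈ I.filter (fun k => j < k) := by
    simp only [Finset.mem_filter]
    exact ⟨fmax_mem hne, lt_of_le_of_ne (le_fmax hne hj) hjm⟩
  have hne' : (I.filter (fun k => j < k)).Nonempty := ⟨_, hmem⟩
  rw [succI, fmin, dif_pos hne']
  have h1 := Finset.min'_mem _ hne'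
  simp only [Finset.mem_filter] at h1
  exact ⟨h1.1, h1.2, fun k hk hjk => Finset.min'_le _ k (by simp [hk, hjk])⟩

lemma predI_spec {I : Finset ℕ} (hne : I.Nonempty) {j : ℕ} (hj : j ∈ I) (hjm : j ≠ fmin I) :
    predI I j ∈ I ∧ predI I j < j ∧ ∀ k ∈ I, k < j → k ≤ predI I j := by
  have hmem : fmin I ∈ I.filter (fun k => k < j) := by
    simp only [Finset.mem_filter]
    exact ⟨fmin_mem hne, lt_of_le_of_ne (fmin_le hne hj) (Ne.symm hjm)⟩
  have hne' : (I.filter (fun k => k < j)).Nonempty := ⟨_, hmem⟩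
  rw [predI, fmax, dif_pos hne']
  have h1 := Finset.max'_mem _ hne'
  simp only [Finset.mem_filter] at h1
  exact ⟨h1.1, h1.2, fun k hk hjk => Finset.le_max' _ k (by simp [hk, hjk])⟩

lemma predI_succI {I : Finset ℕ} (hne : I.Nonempty) {j : ℕ} (hj : j ∈ I) (hjm : j ≠ fmax I) :
    predI I (succI I j) = j := by
  obtain ⟨hs1, hs2, hs3⟩ := succI_spec hne hj hjm
  have hsm : succI I j ≠ fmin I := by
    intro h
    exact absurd (h ▸ fmin_le hne hj) (not_le.mpr hs2)
  obtain ⟨hp1, hp2, hp3⟩ := predI_spec hne hs1 hsm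
  have h1 : j ≤ predI I (succI I j) := hp3 j hj hs2
  have h2 : predI I (succI I j) ≤ j := by
    by_contra h
    exact absurd (hs3 _ hp1 (not_le.mp h)) (not_le.mpr hp2)
  omega

lemma succI_predI {I : Finset ℕ} (hne : I.Nonempty) {j : ℕ} (hj : j ∈ I) (hjm : j ≠ fmin I) :
    succI I (predI I j) = j := by
  obtain ⟨hp1, hp2, hp3⟩ := predI_spec hne hj hjm
  have hpm : predI I j ≠ fmax I := by
    intro h
    exact absurd (h ▸ le_fmax hne hj) (not_le.mpr hp2)
  obtain ⟨hs1, hs2, hs3⟩ := succI_spec hne hp1 hpm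
  have h1 : succI I (predI I j) ≤ j := hs3 j hj hp2
  have h2 : j ≤ succI I (predI I j) := by
    by_contra h
    exact absurd (hp3 _ hs1 (not_le.mp h)) (not_le.mpr hs2)
  omega

lemma succI_of_lt_fmin {I : Finset ℕ} (hne : I.Nonempty) {j : ℕ} (hj : j < fmin I) :
    succI I j = fmin I := by
  rw [succI]
  congr 1
  apply Finset.filter_true_of_mem
  intro k hk
  exact lt_of_lt_of_le hj (fmin_le hne hk)

end Aux
section Aux2

/-- The multiset of values of `c_I(η)` on `[1,n]` is that of `η` with one
`η (fmin I)` replaced by `η (fmin I) + 1`. -/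
lemma sum_cIfun {M : Type*} [AddCommMonoid M] (n : ℕ) (η : ℕ → ℕ) (I : Finset ℕ)
    (hI : I ⊆ Finset.Icc 1 n) (hne : I.Nonempty) (f : ℕ → M) :
    (∑ j ∈ Finset.Icc 1 n, f (cIfun I η j)) + f (η (fmin I)) =
    (∑ j ∈ Finset.Icc 1 n, f (η j)) + f (η (fmin I) + 1) := by
  rw [← Finset.sum_sdiff hI (f := fun j => f (cIfun I η j)),
      ← Finset.sum_sdiff hI (f := fun j => f (η j))]
  have hout : ∀ j ∈ Finset.Icc 1 n \ I, f (cIfun I η j) = f (η j) := by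
    intro j hj
    rw [Finset.mem_sdiff] at hj
    have h1 : j ≠ fmax I := fun h => hj.2 (h ▸ fmax_mem hne)
    rw [cIfun, if_neg h1, if_neg hj.2]
  rw [Finset.sum_congr rfl hout]
  have hin : (∑ j ∈ I, f (cIfun I η j)) + f (η (fmin I)) =
      (∑ j ∈ I, f (η j)) + f (η (fmin I) + 1) := by
    rw [← Finset.add_sum_erase I (fun j => f (cIfun I η j)) (fmax_mem hne),
        ← Finset.add_sum_erase I (fun j => f (η j)) (fmin_mem hne)]
    have hmaxval : cIfun I η (fmax I) = η (fmin I) + 1 := by rw [cIfun, if_pos rfl]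
    rw [hmaxval]
    have hbij : ∑ j ∈ I.erase (fmax I), f (cIfun I η j) =
        ∑ j ∈ I.erase (fmin I), f (η j) := by
      apply Finset.sum_nbij' (succI I) (predI I)
      · intro a ha
        rw [Finset.mem_erase] at ha ⊢
        obtain ⟨h1, h2, _⟩ := succI_spec hne ha.2 ha.1
        exact ⟨fun h => absurd (h ▸ fmin_le hne ha.2) (not_le.mpr h2), h1⟩
      · intro a ha
        rw [Finset.mem_erase] at ha ⊢
        obtain ⟨h1, h2, _⟩ := predI_spec hne ha.2 ha.1
        exact ⟨fun h => absurd (h ▸ le_fmax hne ha.2) (not_le.mpr h2), h1⟩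
      · intro a ha
        rw [Finset.mem_erase] at ha
        exact predI_succI hne ha.2 ha.1
      · intro a ha
        rw [Finset.mem_erase] at ha
        exact succI_predI hne ha.2 ha.1
      · intro a ha
        rw [Finset.mem_erase] at ha
        rw [cIfun, if_neg ha.1, if_pos ha.2]
    rw [hbij]
    abel
  calc (∑ j ∈ Finset.Icc 1 n \ I, f (η j) + ∑ j ∈ I, f (cIfun I η j)) + f (η (fmin I))
      = ∑ j ∈ Finset.Icc 1 n \ I, f (η j) + ((∑ j ∈ I, f (cIfun I η j)) + f (η (fmin I))) := by abel
    _ = ∑ j ∈ Finset.Icc 1 n \ I, f (η j) + ((∑ j ∈ I, f (η j)) + f (η (fmin I) + 1)) := by rw [hin]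
    _ = (∑ j ∈ Finset.Icc 1 n \ I, f (η j) + ∑ j ∈ I, f (η j)) + f (η (fmin I) + 1) := by abel

end Aux2
section Aux3

/-- `∑ μ_i l'_μ(i)` as a sum of `min` over ordered pairs `j < i`. -/
lemma S_eq_T (n : ℕ) (μ : ℕ → ℕ) :
    ∑ i ∈ Finset.Icc 1 n, μ i * lprime n μ i =
    ∑ i ∈ Finset.Icc 1 n, ∑ j ∈ Finset.Icc 1 n, (if j < i then min (μ i) (μ j) else 0) := by
  have expand : ∀ i, μ i * lprime n μ i =
      (∑ j ∈ Finset.Icc 1 n, if j < i ∧ μ i ≤ μ j then μ i else 0) +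
      (∑ j ∈ Finset.Icc 1 n, if i < j ∧ μ i < μ j then μ i else 0) := by
    intro i
    rw [lprime, Nat.mul_add, Finset.card_filter, Finset.card_filter,
        Finset.mul_sum, Finset.mul_sum]
    congr 1 <;> (apply Finset.sum_congr rfl; intro j hj; split_ifs <;> omega)
  rw [Finset.sum_congr rfl (fun i _ => expand i), Finset.sum_add_distrib]
  rw [Finset.sum_comm (f := fun i j => if i < j ∧ μ i < μ j then μ i else 0)]
  rw [← Finset.sum_add_distrib]
  apply Finset.sum_congr rfl; intro i _
  rw [← Finset.sum_add_distrib]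
  apply Finset.sum_congr rfl; intro j _
  rcases Nat.lt_trichotomy (μ i) (μ j) with h | h | h <;> split_ifs <;> omega

/-- Doubling: `2 T(μ) + ∑ μ_i = V(μ)` (the full double sum of mins). -/
lemma two_T_eq (n : ℕ) (μ : ℕ → ℕ) :
    2 * (∑ i ∈ Finset.Icc 1 n, ∑ j ∈ Finset.Icc 1 n, (if j < i then min (μ i) (μ j) else 0))
      + ∑ i ∈ Finset.Icc 1 n, μ i =
    ∑ i ∈ Finset.Icc 1 n, ∑ j ∈ Finset.Icc 1 n, min (μ i) (μ j) := by
  have hswap : ∑ i ∈ Finset.Icc 1 n, ∑ j ∈ Finset.Icc 1 n, (if j < i then min (μ i) (μ j) else 0)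
      = ∑ i ∈ Finset.Icc 1 n, ∑ j ∈ Finset.Icc 1 n, (if i < j then min (μ i) (μ j) else 0) := by
    rw [Finset.sum_comm]
    apply Finset.sum_congr rfl; intro i _
    apply Finset.sum_congr rfl; intro j _
    rw [min_comm]
  have hdiag : ∑ i ∈ Finset.Icc 1 n, μ i =
      ∑ i ∈ Finset.Icc 1 n, ∑ j ∈ Finset.Icc 1 n, (if i = j then min (μ i) (μ j) else 0) := by
    apply Finset.sum_congr rfl; intro i hi
    rw [Finset.sum_ite_eq (Finset.Icc 1 n) i (fun j => min (μ i) (μ j)), if_pos hi, min_self]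
  rw [two_mul]
  nth_rewrite 2 [hswap]
  rw [hdiag, ← Finset.sum_add_distrib, ← Finset.sum_add_distrib]
  apply Finset.sum_congr rfl; intro i _
  rw [← Finset.sum_add_distrib, ← Finset.sum_add_distrib]
  apply Finset.sum_congr rfl; intro j _
  rcases Nat.lt_trichotomy i j with h | h | h <;> split_ifs <;> omega

end Aux3
section Aux4

variable (n : ℕ) (η : ℕ → ℕ) (I : Finset ℕ)

/-- `∑_j min(a+1, η_j) = ∑_j min(a, η_j) + #{j : η_j > a}` where `a = η (fmin I)`. -/
lemma sum_min_succ (a : ℕ) :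
    ∑ j ∈ Finset.Icc 1 n, min (a + 1) (η j) =
    ∑ j ∈ Finset.Icc 1 n, min a (η j) +
      ((Finset.Icc 1 n).filter (fun j => a < η j)).card := by
  rw [Finset.card_filter, ← Finset.sum_add_distrib]
  apply Finset.sum_congr rfl; intro j _
  split_ifs <;> omega

/-- The big double sum `V` changes by `2D + 1` under `c_I`. -/
lemma V_cIfun (hI : I ⊆ Finset.Icc 1 n) (hne : I.Nonempty) :
    ∑ i ∈ Finset.Icc 1 n, ∑ j ∈ Finset.Icc 1 n, min (cIfun I η i) (cIfun I η j) =
    ∑ i ∈ Finset.Icc 1 n, ∑ j ∈ Finset.Icc 1 n, min (η i) (η j) +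
      2 * ((Finset.Icc 1 n).filter (fun j => η (fmin I) < η j)).card + 1 := by
  set a := η (fmin I) with ha
  set D := ((Finset.Icc 1 n).filter (fun j => a < η j)).card with hD
  -- inner replacement: for any x, ∑_j min(x, cη_j) + min(x,a) = ∑_j min(x,η_j) + min(x,a+1)
  have hinner : ∀ x : ℕ, ∑ j ∈ Finset.Icc 1 n, min x (cIfun I η j) + min x a =
      ∑ j ∈ Finset.Icc 1 n, min x (η j) + min x (a + 1) :=
    fun x => sum_cIfun n η I hI hne (fun y => min x y)
  -- V(cη) + ∑_i min(cη_i, a) = ∑_i ∑_j min(cη_i, η_j) + ∑_i min(cη_i, a+1)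
  have hV2 : ∑ i ∈ Finset.Icc 1 n, ∑ j ∈ Finset.Icc 1 n, min (cIfun I η i) (cIfun I η j)
        + ∑ i ∈ Finset.Icc 1 n, min (cIfun I η i) a =
      ∑ i ∈ Finset.Icc 1 n, ∑ j ∈ Finset.Icc 1 n, min (cIfun I η i) (η j)
        + ∑ i ∈ Finset.Icc 1 n, min (cIfun I η i) (a + 1) := by
    rw [← Finset.sum_add_distrib, ← Finset.sum_add_distrib]
    exact Finset.sum_congr rfl (fun i _ => hinner (cIfun I η i))
  -- outer replacement for g(x) = ∑_j min(x, η_j)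
  have hV3 : ∑ i ∈ Finset.Icc 1 n, ∑ j ∈ Finset.Icc 1 n, min (cIfun I η i) (η j)
        + ∑ j ∈ Finset.Icc 1 n, min a (η j) =
      ∑ i ∈ Finset.Icc 1 n, ∑ j ∈ Finset.Icc 1 n, min (η i) (η j)
        + ∑ j ∈ Finset.Icc 1 n, min (a + 1) (η j) :=
    sum_cIfun n η I hI hne (fun x => ∑ j ∈ Finset.Icc 1 n, min x (η j))
  -- replacement for f(x) = min x c
  have hV4 : ∀ c : ℕ, ∑ i ∈ Finset.Icc 1 n, min (cIfun I η i) c + min a c =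
      ∑ i ∈ Finset.Icc 1 n, min (η i) c + min (a + 1) c :=
    fun c => sum_cIfun n η I hI hne (fun x => min x c)
  have h4a := hV4 a
  have h4b := hV4 (a + 1)
  have h5 := sum_min_succ n η a
  -- rewrite the symmetric versions
  have hsym : ∀ c : ℕ, ∑ i ∈ Finset.Icc 1 n, min c (η i) = ∑ i ∈ Finset.Icc 1 n, min (η i) c :=
    fun c => Finset.sum_congr rfl (fun i _ => min_comm _ _)
  rw [hsym, hsym] at hV3
  rw [hsym (a+1), hsym a] at h5
  have haux1 : min a (a + 1) = a := by omega
  have haux2 : min (a + 1) a = a := by omega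
  rw [haux2] at h4a
  rw [haux1] at h4b
  simp only [min_self] at h4a h4b
  omega

/-- Under maximality, `D = l'_η(fmin I)`. -/
lemma D_eq_lprime (hI : I ⊆ Finset.Icc 1 n) (hne : I.Nonempty)
    (hmax : MaximalI n I η) (ht1 : fmin I ∈ Finset.Icc 1 n) :
    ((Finset.Icc 1 n).filter (fun j => η (fmin I) < η j)).card = lprime n η (fmin I) := by
  rw [lprime]
  have hsplit : (Finset.Icc 1 n).filter (fun j => η (fmin I) < η j) =
      (Finset.Icc 1 n).filter (fun j => (j < fmin I ∧ η (fmin I) ≤ η j) ∨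
        (fmin I < j ∧ η (fmin I) < η j)) := by
    apply Finset.filter_congr
    intro j hj
    constructor
    · intro h
      rcases Nat.lt_trichotomy j (fmin I) with hlt | heq | hgt
      · exact Or.inl ⟨hlt, le_of_lt h⟩
      · subst heq; omega
      · exact Or.inr ⟨hgt, h⟩
    · intro h
      rcases h with ⟨hlt, hle⟩ | ⟨_, hlt'⟩
      · -- maximality: j < fmin I implies η j ≠ η (fmin I)
        have hjI : j ∉ I := fun hmem => absurd (fmin_le hne hmem) (not_le.mpr hlt)
        have hjmax : j < fmax I := lt_of_lt_of_le hlt (fmin_le hne (fmax_mem hne))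
        have := hmax.1 j hj hjI hjmax
        rw [succI_of_lt_fmin hne hlt] at this
        omega
      · exact hlt'
  have hdisj : Disjoint ((Finset.Icc 1 n).filter (fun j => j < fmin I ∧ η (fmin I) ≤ η j))
      ((Finset.Icc 1 n).filter (fun j => fmin I < j ∧ η (fmin I) < η j)) := by
    rw [Finset.disjoint_left]
    intro j hj1 hj2
    simp only [Finset.mem_filter] at hj1 hj2
    omega
  rw [hsplit, Finset.filter_or, Finset.card_union_of_disjoint hdisj]

/-- Key lemma B: `∑ cη_i l'_{cη}(i) = ∑ η_i l'_η(i) + l'_η(fmin I)`. -/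
lemma sum_mul_lprime_cIfun (hI : I ⊆ Finset.Icc 1 n) (hne : I.Nonempty)
    (hmax : MaximalI n I η) :
    ∑ i ∈ Finset.Icc 1 n, cIfun I η i * lprime n (cIfun I η) i =
    ∑ i ∈ Finset.Icc 1 n, η i * lprime n η i + lprime n η (fmin I) := by
  have ht1 : fmin I ∈ Finset.Icc 1 n := hI (fmin_mem hne)
  have h1 := S_eq_T n (cIfun I η)
  have h2 := S_eq_T n η
  have h3 := two_T_eq n (cIfun I η)
  have h4 := two_T_eq n η
  have h5 := V_cIfun n η I hI hne
  have h6 : ∑ i ∈ Finset.Icc 1 n, cIfun I η i + η (fmin I) =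
      ∑ i ∈ Finset.Icc 1 n, η i + (η (fmin I) + 1) := sum_cIfun n η I hI hne id
  have h7 := D_eq_lprime n η I hI hne hmax ht1
  omega

end Aux4
section Aux5

lemma q_ne_zero : q ≠ 0 := by
  unfold q
  intro h
  exact MvPolynomial.X_ne_zero 0
    ((map_eq_zero_iff _ (IsFractionRing.injective (MvPolynomial (Fin 2) ℚ) F)).mp h)

lemma t_ne_zero : t ≠ 0 := by
  unfold t
  intro h
  exact MvPolynomial.X_ne_zero 1
    ((map_eq_zero_iff _ (IsFractionRing.injective (MvPolynomial (Fin 2) ℚ) F)).mp h)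

lemma prod_spec_pow (n : ℕ) (μ : ℕ → ℕ) :
    ∏ i ∈ Finset.Icc 1 n, spec q t n μ i ^ μ i =
    q ^ (∑ i ∈ Finset.Icc 1 n, μ i * μ i) *
      (t⁻¹) ^ (∑ i ∈ Finset.Icc 1 n, μ i * lprime n μ i) := by
  have h : ∀ i, spec q t n μ i ^ μ i =
      q ^ (μ i * μ i) * (t⁻¹) ^ (μ i * lprime n μ i) := by
    intro i
    rw [spec, mul_pow, ← pow_mul]
    congr 1
    rw [zpow_neg, zpow_natCast, ← inv_pow, ← pow_mul, Nat.mul_comm]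
  rw [Finset.prod_congr rfl (fun i _ => h i), Finset.prod_mul_distrib,
      Finset.prod_pow_eq_pow_sum, Finset.prod_pow_eq_pow_sum]

lemma sum_sq_cIfun (n : ℕ) (η : ℕ → ℕ) (I : Finset ℕ)
    (hI : I ⊆ Finset.Icc 1 n) (hne : I.Nonempty) :
    ∑ i ∈ Finset.Icc 1 n, cIfun I η i * cIfun I η i =
    ∑ i ∈ Finset.Icc 1 n, η i * η i + (2 * η (fmin I) + 1) := by
  have h := sum_cIfun n η I hI hne (fun x => x * x)
  try simp only at h
  set a := η (fmin I)
  have hring : (a + 1) * (a + 1) = a * a + (2 * a + 1) := by ring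
  linarith

end Aux5
/-- for `I` maximal with respect to `η` and `t_1 = min I`:
`∏_i (c_I(η)‾)_i^{(c_I(η))_i} = q^{2η_{t_1}+1} t^{-l'_η(t_1)} ∏_i η̄_i^{η_i}`;
equivalently `k_η/k_{c_I(η)} = d'_η(q⁻¹,t⁻¹)/(q^{2η_{t_1}+1} t^{-l'_η(t_1)} d'_{c_I(η)}(q⁻¹,t⁻¹))`. -/
theorem kconst_ratio (n : ℕ) (hn : 2 ≤ n)
    (η : ℕ → ℕ) (hη : IsComp n η)
    (I : Finset ℕ) (hI : I ⊆ Finset.Icc 1 n) (hne : I.Nonempty)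
    (hmax : MaximalI n I η) :
    (∏ i ∈ Finset.Icc 1 n, spec q t n (cIfun I η) i ^ (cIfun I η i) =
      q ^ (2 * η (fmin I) + 1) * t ^ (-(lprime n η (fmin I) : ℤ)) *
        ∏ i ∈ Finset.Icc 1 n, spec q t n η i ^ (η i)) ∧
    (kconst n η / kconst n (cIfun I η) =
      dprime q⁻¹ t⁻¹ n η /
        (q ^ (2 * η (fmin I) + 1) * t ^ (-(lprime n η (fmin I) : ℤ)) *
          dprime q⁻¹ t⁻¹ n (cIfun I η))) := by
  have htinv : (t : F) ^ (-(lprime n η (fmin I) : ℤ)) = (t⁻¹) ^ (lprime n η (fmin I)) := by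
    rw [zpow_neg, zpow_natCast, inv_pow]
  have part1 : ∏ i ∈ Finset.Icc 1 n, spec q t n (cIfun I η) i ^ (cIfun I η i) =
      q ^ (2 * η (fmin I) + 1) * t ^ (-(lprime n η (fmin I) : ℤ)) *
        ∏ i ∈ Finset.Icc 1 n, spec q t n η i ^ (η i) := by
    rw [prod_spec_pow, prod_spec_pow, sum_sq_cIfun n η I hI hne,
        sum_mul_lprime_cIfun n η I hI hne hmax, htinv, pow_add, pow_add]
    ring
  refine ⟨part1, ?_⟩
  have hPη : (∏ i ∈ Finset.Icc 1 n, spec q t n η i ^ (η i)) ≠ 0 := by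
    apply Finset.prod_ne_zero_iff.mpr
    intro i _
    apply pow_ne_zero
    rw [spec]
    exact mul_ne_zero (pow_ne_zero _ q_ne_zero) (zpow_ne_zero _ t_ne_zero)
  rw [kconst, kconst, part1]
  set C := q ^ (2 * η (fmin I) + 1) * t ^ (-(lprime n η (fmin I) : ℤ)) with hC
  set Pη := ∏ i ∈ Finset.Icc 1 n, spec q t n η i ^ (η i) with hPdef
  have : C * Pη * dprime q⁻¹ t⁻¹ n (cIfun I η) = Pη * (C * dprime q⁻¹ t⁻¹ n (cIfun I η)) := by
    ring
  rw [this, mul_div_mul_left _ _ hPη]
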